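/- Let μ ≥ 0, τ > 0, C₁, C₂, a ≥ 0, M ≥ 1, and let f : [0,∞) → [0,∞) be continuous and satisfy f(t) ≤ M e^{−μt} a + ∫₀ᵗ e^{−μ(t−s)} (C₁ f(s) + C₂ f(τ⌊s/τ⌋)) ds for all t ≥ 0. Then f(t) ≤ M a e^{(C₁ + C₂ e^{μτ} − μ) t} for all t ≥ 0. -/
import Mathlib

open Set MeasureTheory

set_option maxHeartbeats 800000 in
lemma integral_K_exp_aux (K t : ℝ) :
    ∫ s in (0:ℝ)..t, K * Real.exp (K * s) = Real.exp (K * t) - 1 := by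
  have hderiv : ∀ x ∈ Set.uIcc (0:ℝ) t,
      HasDerivAt (fun s => Real.exp (K * s)) (K * Real.exp (K * x)) x := by
    intro x _
    have h1 : HasDerivAt (fun s : ℝ => K * s) K x := by
      simpa using (hasDerivAt_id x).const_mul K
    simpa [mul_comm] using h1.exp
  have hcont : ContinuousOn (fun x => K * Real.exp (K * x)) (Set.uIcc (0:ℝ) t) := by
    fun_prop
  have hci : IntervalIntegrable (fun x => K * Real.exp (K * x)) MeasureTheory.volume 0 t :=
    Continuous.intervalIntegrable (by fun_prop) 0 t
  have := intervalIntegral.integral_eq_sub_of_hasDerivAt hderiv hci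
  simpa using this

/-- A Gronwall-type lemma with a piecewise-frozen delay term: if
`f(t) ≤ M e^{−μt} a + ∫₀ᵗ e^{−μ(t−s)} (C₁ f(s) + C₂ f(τ⌊s/τ⌋)) ds` for all `t ≥ 0`,
then `f(t) ≤ M a e^{(C₁ + C₂ e^{μτ} − μ) t}` for all `t ≥ 0`. -/
theorem gronwall_with_frozen_delay
    (μ τ C₁ C₂ a M : ℝ) (hμ : 0 ≤ μ) (hτ : 0 < τ) (hC₁ : 0 ≤ C₁) (hC₂ : 0 ≤ C₂)
    (ha : 0 ≤ a) (hM : 1 ≤ M)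
    (f : ℝ → ℝ) (hfc : ContinuousOn f (Ici 0)) (hf0 : ∀ t ≥ (0 : ℝ), 0 ≤ f t)
    (hineq : ∀ t ≥ (0 : ℝ),
      f t ≤ M * Real.exp (-μ * t) * a +
        ∫ s in (0 : ℝ)..t, Real.exp (-μ * (t - s)) * (C₁ * f s + C₂ * f (τ * (⌊s / τ⌋ : ℤ)))) :
    ∀ t ≥ (0 : ℝ), f t ≤ M * a * Real.exp ((C₁ + C₂ * Real.exp (μ * τ) - μ) * t) := by
  set K := C₁ + C₂ * Real.exp (μ * τ) with hKdef
  have hK0 : 0 ≤ K := by positivity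
  have key : ∀ ε > (0:ℝ), ∀ t ≥ (0:ℝ), f t ≤ (M * a + ε) * Real.exp ((K - μ) * t) := by
    intro ε hε
    by_contra hcon
    push_neg at hcon
    obtain ⟨t1, ht1, hft1⟩ := hcon
    set S : Set ℝ := {t | 0 ≤ t ∧ (M * a + ε) * Real.exp ((K - μ) * t) < f t} with hSdef
    have hS_ne : S.Nonempty := ⟨t1, ht1, hft1⟩
    have hS_bdd : BddBelow S := ⟨0, fun x hx => hx.1⟩
    set t₀ := sInf S with ht₀def
    have ht₀0 : 0 ≤ t₀ := le_csInf hS_ne (fun x hx => hx.1)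
    have hnot : ∀ s, 0 ≤ s → s < t₀ → f s ≤ (M * a + ε) * Real.exp ((K - μ) * s) := by
      intro s hs hst
      by_contra h
      push_neg at h
      exact absurd (csInf_le hS_bdd ⟨hs, h⟩) (not_le.mpr hst)
    -- f t₀ ≥ bound, by continuity and t₀ ∈ closure S
    have hge : (M * a + ε) * Real.exp ((K - μ) * t₀) ≤ f t₀ := by
      have hcl : t₀ ∈ closure S := csInf_mem_closure hS_ne hS_bdd
      have hgc : ContinuousWithinAt
          (fun x => f x - (M * a + ε) * Real.exp ((K - μ) * x)) S t₀ := by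
        have h1 : ContinuousOn (fun x => f x - (M * a + ε) * Real.exp ((K - μ) * x))
            (Ici (0:ℝ)) := hfc.sub (by fun_prop)
        exact (h1 t₀ ht₀0).mono (fun x hx => hx.1)
      have hne : (nhdsWithin t₀ S).NeBot := mem_closure_iff_nhdsWithin_neBot.mp hcl
      have : (0:ℝ) ≤ f t₀ - (M * a + ε) * Real.exp ((K - μ) * t₀) := by
        refine ge_of_tendsto hgc ?_
        filter_upwards [self_mem_nhdsWithin] with x hx
        exact le_of_lt (sub_pos.mpr hx.2)
      linarith
    -- the upper-bound integrand
    set h : ℝ → ℝ := fun s => (M * a + ε) * Real.exp (-μ * t₀) * (K * Real.exp (K * s))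
      with hhdef
    -- bound the integral
    have hres : volume.restrict (Ioc (0:ℝ) t₀) = volume.restrict (Ioo (0:ℝ) t₀) :=
      (Measure.restrict_congr_set Ioo_ae_eq_Ioc).symm
    have hintle :
        (∫ s in (0:ℝ)..t₀, Real.exp (-μ * (t₀ - s)) *
            (C₁ * f s + C₂ * f (τ * (⌊s / τ⌋ : ℤ)))) ≤ ∫ s in (0:ℝ)..t₀, h s := by
      rw [intervalIntegral.integral_of_le ht₀0, intervalIntegral.integral_of_le ht₀0, hres]
      refine integral_mono_of_nonneg ?_ ?_ ?_
      · filter_upwards [ae_restrict_mem measurableSet_Ioo] with s hs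
        have hs0 : (0:ℝ) < s := hs.1
        have hq0 : (0:ℝ) ≤ τ * (⌊s / τ⌋ : ℤ) := by
          have : (0:ℤ) ≤ ⌊s / τ⌋ := Int.floor_nonneg.mpr (by positivity)
          positivity
        have := hf0 s hs0.le
        have := hf0 _ hq0
        positivity
      · have hc : Continuous h := by fun_prop
        exact (hc.integrableOn_Icc (a := (0:ℝ)) (b := t₀)).mono_set Ioo_subset_Icc_self
      · filter_upwards [ae_restrict_mem measurableSet_Ioo] with s hs
        obtain ⟨hs0, hst⟩ := hs
        set q : ℝ := τ * (⌊s / τ⌋ : ℤ) with hqdef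
        have hq0 : (0:ℝ) ≤ q := by
          have : (0:ℤ) ≤ ⌊s / τ⌋ := Int.floor_nonneg.mpr (by positivity)
          have h2 : (0:ℝ) ≤ (⌊s / τ⌋ : ℤ) := by exact_mod_cast this
          positivity
        have hqs : q ≤ s := by
          have h1 : ((⌊s / τ⌋ : ℤ) : ℝ) ≤ s / τ := Int.floor_le _
          calc q ≤ τ * (s / τ) := by
                exact mul_le_mul_of_nonneg_left h1 hτ.le
            _ = s := by field_simp
        have hsq : s - q ≤ τ := by
          have h1 : s / τ < (⌊s / τ⌋ : ℤ) + 1 := Int.lt_floor_add_one _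
          have h2 : s < τ * ((⌊s / τ⌋ : ℤ) + 1) := by
            calc s = τ * (s / τ) := by field_simp
              _ < τ * ((⌊s / τ⌋ : ℤ) + 1) := by
                  exact mul_lt_mul_of_pos_left h1 hτ
          nlinarith
        have hfs : f s ≤ (M * a + ε) * Real.exp ((K - μ) * s) := hnot s hs0.le hst
        have hfq : f q ≤ (M * a + ε) * Real.exp ((K - μ) * q) :=
          hnot q hq0 (lt_of_le_of_lt hqs hst)
        have hexp1 : Real.exp (-μ * (t₀ - s)) * Real.exp ((K - μ) * s)
            = Real.exp (-μ * t₀) * Real.exp (K * s) := by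
          rw [← Real.exp_add, ← Real.exp_add]; ring_nf
        have hexp2 : Real.exp (-μ * (t₀ - s)) * Real.exp ((K - μ) * q)
            ≤ Real.exp (μ * τ) * (Real.exp (-μ * t₀) * Real.exp (K * s)) := by
          rw [← Real.exp_add, ← Real.exp_add, ← Real.exp_add]
          apply Real.exp_le_exp.mpr
          have h1 : μ * (s - q) ≤ μ * τ := mul_le_mul_of_nonneg_left hsq hμ
          have h2 : K * q ≤ K * s := mul_le_mul_of_nonneg_left hqs hK0
          nlinarith
        have hE : (0:ℝ) < Real.exp (-μ * (t₀ - s)) := Real.exp_pos _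
        have hMe : (0:ℝ) ≤ M * a + ε := by positivity
        calc Real.exp (-μ * (t₀ - s)) * (C₁ * f s + C₂ * f q)
            ≤ Real.exp (-μ * (t₀ - s)) *
              (C₁ * ((M * a + ε) * Real.exp ((K - μ) * s)) +
               C₂ * ((M * a + ε) * Real.exp ((K - μ) * q))) := by
              apply mul_le_mul_of_nonneg_left _ hE.le
              have := mul_le_mul_of_nonneg_left hfs hC₁
              have := mul_le_mul_of_nonneg_left hfq hC₂
              linarith
          _ = C₁ * (M * a + ε) * (Real.exp (-μ * (t₀ - s)) * Real.exp ((K - μ) * s))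
              + C₂ * (M * a + ε) * (Real.exp (-μ * (t₀ - s)) * Real.exp ((K - μ) * q)) := by
              ring
          _ ≤ C₁ * (M * a + ε) * (Real.exp (-μ * t₀) * Real.exp (K * s))
              + C₂ * (M * a + ε) *
                (Real.exp (μ * τ) * (Real.exp (-μ * t₀) * Real.exp (K * s))) := by
              rw [hexp1]
              have := mul_le_mul_of_nonneg_left hexp2 (by positivity : (0:ℝ) ≤ C₂ * (M * a + ε))
              linarith
          _ = h s := by rw [hhdef]; simp only [hKdef]; ring
    have hintval : ∫ s in (0:ℝ)..t₀, h s
        = (M * a + ε) * Real.exp (-μ * t₀) * (Real.exp (K * t₀) - 1) := by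
      rw [hhdef]
      rw [intervalIntegral.integral_const_mul]
      rw [integral_K_exp_aux]
    have hup := hineq t₀ ht₀0
    have hlt : M * Real.exp (-μ * t₀) * a +
        (M * a + ε) * Real.exp (-μ * t₀) * (Real.exp (K * t₀) - 1)
        < (M * a + ε) * Real.exp ((K - μ) * t₀) := by
      have hEe : Real.exp ((K - μ) * t₀) = Real.exp (-μ * t₀) * Real.exp (K * t₀) := by
        rw [← Real.exp_add]; ring_nf
      rw [hEe]
      have hE : (0:ℝ) < Real.exp (-μ * t₀) := Real.exp_pos _
      nlinarith
    rw [hintval] at hintle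
    linarith
  -- conclude by letting ε → 0
  intro t ht
  have hE : (0:ℝ) < Real.exp ((K - μ) * t) := Real.exp_pos _
  refine le_of_forall_pos_le_add ?_
  intro δ hδ
  have h1 := key (δ / Real.exp ((K - μ) * t)) (by positivity) t ht
  have h2 : (M * a + δ / Real.exp ((K - μ) * t)) * Real.exp ((K - μ) * t)
      = M * a * Real.exp ((K - μ) * t) + δ := by
    field_simp
  rw [h2] at h1
  simpa [hKdef] using h1
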